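/- For every pointed pair (K,L,⋆) of Kan complexes the following natural sequence is exact: … → π_{n+1}(K,L,⋆) →^{∂_*} π_n(L,⋆) →^{i_*} π_n(K,⋆) →^{p_*} π_n(K,L,⋆) →^{∂_*} … → π_1(K,L,⋆) →^{∂_*} π_0(L,⋆) →^{i_*} π_0(K,⋆), where i_* is induced by the inclusion L ↪ K, p_* is induced by the identification π_n(K,⋆) ≅ π_n(K,⋆,⋆) followed by the map of pairs (K,⋆) → (K,L), and ∂_*[x] = [d_0 x]; exactness holds in the sense of groups where the terms are groups and in the sense of pointed sets at the π_0 and π_1 terms. -/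

import Mathlib

/-- A simplicial set, given combinatorially by sets of `n`-simplices together with
face operators `d i : K_{n+1} → K_n` (`i ≤ n+1`) and degeneracy operators
`s i : K_n → K_{n+1}` (`i ≤ n`) satisfying the simplicial identities.
(The operators are indexed by natural numbers; their values at out-of-range
indices are irrelevant.) -/
structure SSetC where
  obj : ℕ → Type
  d : (n : ℕ) → ℕ → obj (n + 1) → obj n
  s : (n : ℕ) → ℕ → obj n → obj (n + 1)
  dd : ∀ (n i j : ℕ), i < j → j ≤ n + 2 → ∀ x : obj (n + 2),
      d n i (d (n + 1) j x) = d n (j - 1) (d (n + 1) i x)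
  ss : ∀ (n i j : ℕ), i ≤ j → j ≤ n → ∀ x : obj n,
      s (n + 1) i (s n j x) = s (n + 1) (j + 1) (s n i x)
  ds_lt : ∀ (n i j : ℕ), i < j → j ≤ n + 1 → ∀ x : obj (n + 1),
      d (n + 1) i (s (n + 1) j x) = s n (j - 1) (d n i x)
  ds_self : ∀ (n i : ℕ), i ≤ n → ∀ x : obj n, d n i (s n i x) = x
  ds_succ : ∀ (n i : ℕ), i ≤ n → ∀ x : obj n, d n (i + 1) (s n i x) = x
  ds_gt : ∀ (n i j : ℕ), j + 1 < i → i ≤ n + 2 → ∀ x : obj (n + 1),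
      d (n + 1) i (s (n + 1) j x) = s n j (d n (i - 1) x)

namespace SSetC

variable (K : SSetC)

/-- The boundary `∂x = (d_0 x, …, d_{m+1} x)` of an `(m+1)`-simplex. -/
def bdry {m : ℕ} (x : K.obj (m + 1)) : Fin (m + 2) → K.obj m := fun i => K.d m i x

/-- An `(m+2)`-tuple of `m`-simplices is an `m`-boundary if it is the boundary of
some `(m+1)`-simplex. -/
def IsBoundary {m : ℕ} (c : Fin (m + 2) → K.obj m) : Prop :=
  ∃ x : K.obj (m + 1), K.bdry x = c

/-- An `(m+2)`-tuple of `m`-simplices is compatible (an `m`-cycle) if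
`d_i x_j = d_{j-1} x_i` for all `i < j` (a vacuous condition for `m = 0`). -/
def Compat : ∀ {m : ℕ}, (Fin (m + 2) → K.obj m) → Prop
  | 0 => fun _ => True
  | m + 1 => fun c => ∀ i j : Fin (m + 3), (i : ℕ) < (j : ℕ) →
      K.d m i (c j) = K.d m ((j : ℕ) - 1) (c i)

/-- Compatibility of an `(m,k)`-horn: the entry at position `k` is disregarded. -/
def HornCompat : ∀ {m : ℕ}, ℕ → (Fin (m + 2) → K.obj m) → Prop
  | 0 => fun _ _ => True
  | m + 1 => fun k c => ∀ i j : Fin (m + 3), (i : ℕ) ≠ k → (j : ℕ) ≠ k → (i : ℕ) < (j : ℕ) →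
      K.d m i (c j) = K.d m ((j : ℕ) - 1) (c i)

/-- A simplicial set is a Kan complex if every horn has a filling. -/
def IsKan : Prop :=
  ∀ (m k : ℕ), k ≤ m + 1 → ∀ c : Fin (m + 2) → K.obj m, K.HornCompat k c →
    ∃ x : K.obj (m + 1), ∀ i : Fin (m + 2), (i : ℕ) ≠ k → K.d m i x = c i

/-- The cycle `(s_{n-1} d_0 x, …, s_{n-1} d_{n-1} x, x, y)` used to define homotopy
of `n`-simplices (for `n = 0` it is just `(x, y)`). -/
def homotopyTuple : ∀ {n : ℕ}, K.obj n → K.obj n → Fin (n + 2) → K.obj n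
  | 0 => fun x y => ![x, y]
  | n + 1 => fun x y i =>
      if (i : ℕ) < n + 1 then K.s n n (K.d n i x)
      else if (i : ℕ) = n + 1 then x else y

/-- Two `n`-simplices (with the same boundary) are homotopic if the corresponding
cycle is a boundary. -/
def Homotopic {n : ℕ} (x y : K.obj n) : Prop :=
  K.IsBoundary (K.homotopyTuple x y)

/-- `∂x = ∂y` (a vacuous condition for vertices). -/
def SameBdry : ∀ {n : ℕ}, K.obj n → K.obj n → Prop
  | 0 => fun _ _ => True
  | _ + 1 => fun x y => K.bdry x = K.bdry y

/-- The simplex `⋆_n` of the subcomplex generated by a base point. -/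
def basept (b : K.obj 0) : ∀ n : ℕ, K.obj n
  | 0 => b
  | n + 1 => K.s n 0 (basept b n)

lemma basept_succ (b : K.obj 0) (n : ℕ) : K.basept b (n + 1) = K.s n 0 (K.basept b n) := rfl

lemma s_basept (b : K.obj 0) : ∀ n i : ℕ, i ≤ n → K.s n i (K.basept b n) = K.basept b (n + 1) := by
  intro n
  induction n with
  | zero => intro i hi; interval_cases i; rfl
  | succ n ih =>
    intro i hi
    match i, hi with
    | 0, _ => rfl
    | (i + 1), hi =>
      have h1 : K.basept b (n + 1) = K.s n 0 (K.basept b n) := rfl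
      rw [h1, ← K.ss n 0 i (Nat.zero_le _) (by omega), ih i (by omega)]
      exact (K.basept_succ b (n + 1)).symm

lemma d_basept (b : K.obj 0) : ∀ n i : ℕ, i ≤ n + 1 → K.d n i (K.basept b (n + 1)) = K.basept b n := by
  intro n
  induction n with
  | zero =>
    intro i hi
    interval_cases i
    · exact K.ds_self 0 0 (le_refl 0) b
    · exact K.ds_succ 0 0 (le_refl 0) b
  | succ n ih =>
    intro i hi
    match i, hi with
    | 0, _ => exact K.ds_self (n + 1) 0 (Nat.zero_le _) _
    | 1, _ => exact K.ds_succ (n + 1) 0 (Nat.zero_le _) _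
    | (i + 2), hi =>
      have h1 : K.basept b (n + 1 + 1) = K.s (n + 1) 0 (K.basept b (n + 1)) := rfl
      rw [h1, K.ds_gt n (i + 2) 0 (by omega) (by omega)]
      show K.s n 0 (K.d n (i + 1) (K.basept b (n + 1))) = _
      rw [ih (i + 1) (by omega), K.s_basept b n 0 (Nat.zero_le _)]

/-- An `(m+1)`-simplex is spherical if all of its faces are the base point. -/
def IsSph (b : K.obj 0) {m : ℕ} (x : K.obj (m + 1)) : Prop :=
  ∀ i : Fin (m + 2), K.d m i x = K.basept b m

/-- Sphericality for simplices of arbitrary dimension (vacuous for vertices). -/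
def IsSph' (b : K.obj 0) : ∀ {n : ℕ}, K.obj n → Prop
  | 0 => fun _ => True
  | _ + 1 => fun x => K.IsSph b x

lemma basept_isSph (b : K.obj 0) (m : ℕ) : K.IsSph b (K.basept b (m + 1)) :=
  fun i => K.d_basept b m i (Nat.lt_succ_iff.mp i.isLt)

/-- The cycle `(⋆, …, ⋆, y, z, x)` witnessing `[x][y] = [z]` in `π_{m+1}`. -/
def mulTuple (b : K.obj 0) {m : ℕ} (x y z : K.obj (m + 1)) : Fin (m + 3) → K.obj (m + 1) :=
  fun i =>
    if (i : ℕ) < m then K.basept b (m + 1)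
    else if (i : ℕ) = m then y
    else if (i : ℕ) = m + 1 then z
    else x

/-- `z` is a product of `x` and `y` in the sense of the homotopy group `π_{m+1}`. -/
def MulWitness (b : K.obj 0) {m : ℕ} (x y z : K.obj (m + 1)) : Prop :=
  K.IsBoundary (K.mulTuple b x y z)

/-- Spherical `(m+1)`-simplices: the representatives of `π_{m+1}(K,⋆)`. -/
def Sph (b : K.obj 0) (m : ℕ) := {x : K.obj (m + 1) // K.IsSph b x}

/-- The homotopy group `π_{m+1}(K,⋆)` as a quotient set. -/
def piGrp (b : K.obj 0) (m : ℕ) := Quot (fun x y : K.Sph b m => K.Homotopic x.1 y.1)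

/-- The homotopy class of a spherical simplex. -/
def cls (b : K.obj 0) (m : ℕ) (x : K.Sph b m) : K.piGrp b m := Quot.mk _ x

/-- A binary operation on `π_{m+1}(K,⋆)` is induced by horn filling if it sends
classes of `x` and `y` to the class of any product witness `z`. -/
def MulDescends (b : K.obj 0) (m : ℕ) (mul : K.piGrp b m → K.piGrp b m → K.piGrp b m) : Prop :=
  ∀ x y z : K.Sph b m, K.MulWitness b x.1 y.1 z.1 → mul (K.cls b m x) (K.cls b m y) = K.cls b m z

/-- A Kan complex is minimal if homotopic simplices with equal boundaries are equal. -/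
def Minimal : Prop :=
  ∀ (n : ℕ) (x y : K.obj n), K.SameBdry x y → K.Homotopic x y → x = y

end SSetC
namespace SSetC

variable (K : SSetC)

/-- A subcomplex of a simplicial set: a family of subsets closed under the
face and degeneracy operators. -/
structure Subcomplex (K : SSetC) where
  mem : ∀ n, Set (K.obj n)
  d_mem : ∀ (n i : ℕ), i ≤ n + 1 → ∀ x ∈ mem (n + 1), K.d n i x ∈ mem n
  s_mem : ∀ (n i : ℕ), i ≤ n → ∀ x ∈ mem n, K.s n i x ∈ mem (n + 1)

/-- The subcomplex `L` is itself a Kan complex: every horn with entries in `L`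
has a filling lying in `L`. -/
def Subcomplex.IsKan {K : SSetC} (L : Subcomplex K) : Prop :=
  ∀ (m k : ℕ), k ≤ m + 1 → ∀ c : Fin (m + 2) → K.obj m,
    (∀ i : Fin (m + 2), (i : ℕ) ≠ k → c i ∈ L.mem m) → K.HornCompat k c →
    ∃ x : K.obj (m + 1), x ∈ L.mem (m + 1) ∧ ∀ i : Fin (m + 2), (i : ℕ) ≠ k → K.d m i x = c i

/-- A tuple of `m`-simplices lying in a subcomplex is a boundary in the subcomplex
if it is the boundary of a simplex of the subcomplex. -/
def IsBoundaryIn (L : Subcomplex K) {m : ℕ} (c : Fin (m + 2) → K.obj m) : Prop :=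
  ∃ x ∈ L.mem (m + 1), K.bdry x = c

/-- Homotopy of simplices realized inside a subcomplex. -/
def HomotopicIn (L : Subcomplex K) {n : ℕ} (x y : K.obj n) : Prop :=
  K.IsBoundaryIn L (K.homotopyTuple x y)

/-- The cycle `(h_L, s_m d_1 x, …, s_m d_m x, x, y)` used to define relative homotopy. -/
def relTuple {m : ℕ} (hL x y : K.obj (m + 1)) : Fin (m + 3) → K.obj (m + 1) :=
  fun i =>
    if (i : ℕ) = 0 then hL
    else if (i : ℕ) < m + 1 then K.s m m (K.d m i x)
    else if (i : ℕ) = m + 1 then x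
    else y

/-- Two `(m+1)`-simplices are homotopic relative to a subcomplex `L`. -/
def HomotopicRel (L : Subcomplex K) {m : ℕ} (x y : K.obj (m + 1)) : Prop :=
  (∀ i : ℕ, 1 ≤ i → i ≤ m + 1 → K.d m i x = K.d m i y) ∧
  K.d m 0 x ∈ L.mem m ∧ K.d m 0 y ∈ L.mem m ∧
  ∃ hL ∈ L.mem (m + 1), K.IsBoundary (K.relTuple hL x y)

/-- Representatives of the relative homotopy group `π_{m+1}(K,L,⋆)`:
`∂x = (l, ⋆, …, ⋆)` with `l ∈ L`. -/
def IsRelSph (L : Subcomplex K) (b : K.obj 0) {m : ℕ} (x : K.obj (m + 1)) : Prop :=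
  K.d m 0 x ∈ L.mem m ∧ ∀ i : Fin (m + 2), 1 ≤ (i : ℕ) → K.d m i x = K.basept b m

def RelSph (L : Subcomplex K) (b : K.obj 0) (m : ℕ) := {x : K.obj (m + 1) // K.IsRelSph L b x}

/-- The relative homotopy group `π_{m+1}(K,L,⋆)` as a quotient set. -/
def piRel (L : Subcomplex K) (b : K.obj 0) (m : ℕ) :=
  Quot (fun x y : K.RelSph L b m => K.HomotopicRel L x.1 y.1)

def relCls (L : Subcomplex K) (b : K.obj 0) (m : ℕ) (x : K.RelSph L b m) : K.piRel L b m :=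
  Quot.mk _ x

/-- The cycle `(h, ⋆, …, ⋆, y, z, x)` (with `h ∈ L`) witnessing `[x][y] = [z]` in
the relative homotopy group `π_{m+2}(K,L,⋆)`. -/
def relMulTuple (b : K.obj 0) {m : ℕ} (h x y z : K.obj (m + 2)) : Fin (m + 4) → K.obj (m + 2) :=
  fun i =>
    if (i : ℕ) = 0 then h
    else if (i : ℕ) < m + 1 then K.basept b (m + 2)
    else if (i : ℕ) = m + 1 then y
    else if (i : ℕ) = m + 2 then z
    else x

def RelMulWitness (L : Subcomplex K) (b : K.obj 0) {m : ℕ} (x y z : K.obj (m + 2)) : Prop :=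
  ∃ h ∈ L.mem (m + 2), K.IsBoundary (K.relMulTuple b h x y z)

def RelMulDescends (L : Subcomplex K) (b : K.obj 0) (m : ℕ)
    (mul : K.piRel L b (m + 1) → K.piRel L b (m + 1) → K.piRel L b (m + 1)) : Prop :=
  ∀ x y z : K.RelSph L b (m + 1), K.RelMulWitness L b x.1 y.1 z.1 →
    mul (K.relCls L b (m + 1) x) (K.relCls L b (m + 1) y) = K.relCls L b (m + 1) z

/-- The subcomplex generated by a base point. -/
def ptSub (b : K.obj 0) : Subcomplex K where
  mem n := {x | x = K.basept b n}
  d_mem n i hi x hx := by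
    simp only [Set.mem_setOf_eq] at *
    rw [hx]; exact K.d_basept b n i hi
  s_mem n i hi x hx := by
    simp only [Set.mem_setOf_eq] at *
    rw [hx]; exact K.s_basept b n i hi

/-- The full subcomplex. -/
def topSub : Subcomplex K where
  mem _ := Set.univ
  d_mem _ _ _ _ _ := trivial
  s_mem _ _ _ _ _ := trivial

/-- The empty subcomplex. -/
def botSub : Subcomplex K where
  mem _ := ∅
  d_mem _ _ _ _ h := h.elim
  s_mem _ _ _ _ h := h.elim

/-- A simplicial map between simplicial sets. -/
structure SMap (K L : SSetC) where
  app : ∀ n, K.obj n → L.obj n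
  comm_d : ∀ (n i : ℕ), i ≤ n + 1 → ∀ x : K.obj (n + 1), app n (K.d n i x) = L.d n i (app (n + 1) x)
  comm_s : ∀ (n i : ℕ), i ≤ n → ∀ x : K.obj n, app (n + 1) (K.s n i x) = L.s n i (app n x)

/-- The identity simplicial map. -/
def SMap.idMap (K : SSetC) : SMap K K :=
  ⟨fun _ x => x, fun _ _ _ _ => rfl, fun _ _ _ _ => rfl⟩

/-- Composition of simplicial maps. -/
def SMap.comp {K L M : SSetC} (f : SMap K L) (g : SMap L M) : SMap K M where
  app n x := g.app n (f.app n x)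
  comm_d n i hi x := by (try dsimp only); rw [f.comm_d n i hi, g.comm_d n i hi]
  comm_s n i hi x := by (try dsimp only); rw [f.comm_s n i hi, g.comm_s n i hi]

lemma SMap.basept_app {K L : SSetC} (f : SMap K L) (b : K.obj 0) :
    ∀ n, f.app n (K.basept b n) = L.basept (f.app 0 b) n := by
  intro n
  induction n with
  | zero => rfl
  | succ n ih =>
    have h1 : K.basept b (n + 1) = K.s n 0 (K.basept b n) := rfl
    rw [h1, f.comm_s n 0 (Nat.zero_le _), ih]
    rfl

/-- The product of two simplicial sets. -/
def prodSSet (K L : SSetC) : SSetC where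
  obj n := K.obj n × L.obj n
  d n i x := (K.d n i x.1, L.d n i x.2)
  s n i x := (K.s n i x.1, L.s n i x.2)
  dd n i j h1 h2 x := Prod.ext (K.dd n i j h1 h2 x.1) (L.dd n i j h1 h2 x.2)
  ss n i j h1 h2 x := Prod.ext (K.ss n i j h1 h2 x.1) (L.ss n i j h1 h2 x.2)
  ds_lt n i j h1 h2 x := Prod.ext (K.ds_lt n i j h1 h2 x.1) (L.ds_lt n i j h1 h2 x.2)
  ds_self n i h x := Prod.ext (K.ds_self n i h x.1) (L.ds_self n i h x.2)
  ds_succ n i h x := Prod.ext (K.ds_succ n i h x.1) (L.ds_succ n i h x.2)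
  ds_gt n i j h1 h2 x := Prod.ext (K.ds_gt n i j h1 h2 x.1) (L.ds_gt n i j h1 h2 x.2)

/-- The product of a family of simplicial sets. -/
def piSSet {I : Type} (F : I → SSetC) : SSetC where
  obj n := ∀ i, (F i).obj n
  d n j x := fun i => (F i).d n j (x i)
  s n j x := fun i => (F i).s n j (x i)
  dd n i j h1 h2 x := funext fun a => (F a).dd n i j h1 h2 (x a)
  ss n i j h1 h2 x := funext fun a => (F a).ss n i j h1 h2 (x a)
  ds_lt n i j h1 h2 x := funext fun a => (F a).ds_lt n i j h1 h2 (x a)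
  ds_self n i h x := funext fun a => (F a).ds_self n i h (x a)
  ds_succ n i h x := funext fun a => (F a).ds_succ n i h (x a)
  ds_gt n i j h1 h2 x := funext fun a => (F a).ds_gt n i j h1 h2 (x a)

/-- The coproduct (disjoint union) of a family of simplicial sets. -/
def sigmaSSet {I : Type} (F : I → SSetC) : SSetC where
  obj n := Σ i, (F i).obj n
  d n j x := ⟨x.1, (F x.1).d n j x.2⟩
  s n j x := ⟨x.1, (F x.1).s n j x.2⟩
  dd n i j h1 h2 x := congrArg (Sigma.mk x.1) ((F x.1).dd n i j h1 h2 x.2)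
  ss n i j h1 h2 x := congrArg (Sigma.mk x.1) ((F x.1).ss n i j h1 h2 x.2)
  ds_lt n i j h1 h2 x := congrArg (Sigma.mk x.1) ((F x.1).ds_lt n i j h1 h2 x.2)
  ds_self n i h x := congrArg (Sigma.mk x.1) ((F x.1).ds_self n i h x.2)
  ds_succ n i h x := congrArg (Sigma.mk x.1) ((F x.1).ds_succ n i h x.2)
  ds_gt n i j h1 h2 x := congrArg (Sigma.mk x.1) ((F x.1).ds_gt n i j h1 h2 x.2)

/-- The one-point simplicial set. -/
def ptSSet : SSetC where
  obj _ := PUnit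
  d _ _ _ := PUnit.unit
  s _ _ _ := PUnit.unit
  dd _ _ _ _ _ _ := rfl
  ss _ _ _ _ _ _ := rfl
  ds_lt _ _ _ _ _ _ := rfl
  ds_self _ _ _ _ := rfl
  ds_succ _ _ _ _ := rfl
  ds_gt _ _ _ _ _ _ := rfl

/-- The standard `1`-simplex `Δ¹`: an `n`-simplex is a monotone map `[n] → [1]`,
encoded by the number `k ∈ {0, …, n+1}` of vertices sent to `0`. -/
def deltaOne : SSetC where
  obj n := Fin (n + 2)
  d n i k := ⟨if i < (k : ℕ) then (k : ℕ) - 1 else min (k : ℕ) (n + 1), by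
    have := k.isLt; split_ifs <;> omega⟩
  s n i k := ⟨if i < (k : ℕ) then (k : ℕ) + 1 else (k : ℕ), by
    have := k.isLt; split_ifs <;> omega⟩
  dd := by
    intro n i j h1 h2 x
    apply Fin.ext
    have := x.isLt
    simp only []
    split_ifs <;> omega
  ss := by
    intro n i j h1 h2 x
    apply Fin.ext
    have := x.isLt
    simp only []
    split_ifs <;> omega
  ds_lt := by
    intro n i j h1 h2 x
    apply Fin.ext
    have := x.isLt
    simp only []
    split_ifs <;> omega
  ds_self := by
    intro n i h x
    apply Fin.ext
    have := x.isLt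
    simp only []
    split_ifs <;> omega
  ds_succ := by
    intro n i h x
    apply Fin.ext
    have := x.isLt
    simp only []
    split_ifs <;> omega
  ds_gt := by
    intro n i j h1 h2 x
    apply Fin.ext
    have := x.isLt
    simp only []
    split_ifs <;> omega

/-- The `0`-end of `Δ¹` in dimension `n` (all vertices sent to `0`). -/
def vertexZero (n : ℕ) : Fin (n + 2) := ⟨n + 1, by omega⟩

/-- The `1`-end of `Δ¹` in dimension `n` (all vertices sent to `1`). -/
def vertexOne (n : ℕ) : Fin (n + 2) := ⟨0, by omega⟩

end SSetC

namespace SSetC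

variable {K : SSetC}

/-- Horn filling in a Kan subcomplex, with `ℕ`-indexed tuples, for horns of
`(m+1)`-simplices. -/
lemma fillN (M : Subcomplex K) (hM : M.IsKan) (m k : ℕ) (hk : k ≤ m + 2)
    (c : ℕ → K.obj (m + 1))
    (hmem : ∀ i, i ≤ m + 2 → i ≠ k → c i ∈ M.mem (m + 1))
    (hcpt : ∀ i j, i < j → j ≤ m + 2 → i ≠ k → j ≠ k →
      K.d m i (c j) = K.d m (j - 1) (c i)) :
    ∃ x, x ∈ M.mem (m + 2) ∧ ∀ i, i ≤ m + 2 → i ≠ k → K.d (m + 1) i x = c i := by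
  obtain ⟨x, hxM, hx⟩ := hM (m + 1) k hk (fun i : Fin (m + 3) => c i)
    (fun i hi => hmem i (by have := i.isLt; omega) hi)
    (by intro i j hi hj hij; exact hcpt i j hij (by have := j.isLt; omega) hi hj)
  exact ⟨x, hxM, fun i hi hik => hx ⟨i, by omega⟩ hik⟩

lemma topSub_isKan (hK : K.IsKan) : (K.topSub).IsKan := by
  intro m k hk c _ hc
  obtain ⟨x, hx⟩ := hK m k hk c hc
  exact ⟨x, Set.mem_univ x, hx⟩

lemma mem_basept (L : Subcomplex K) {b : K.obj 0} (hb : b ∈ L.mem 0) :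
    ∀ n, K.basept b n ∈ L.mem n
  | 0 => hb
  | n + 1 => L.s_mem n 0 (Nat.zero_le n) _ (mem_basept L hb n)

lemma sph_face {b : K.obj 0} {m : ℕ} {x : K.obj (m + 1)} (hx : K.IsSph b x)
    (i : ℕ) (hi : i ≤ m + 1) : K.d m i x = K.basept b m := hx ⟨i, by omega⟩

lemma sph'_s_face {b : K.obj 0} : ∀ {m : ℕ} (a : K.obj m), K.IsSph' b a →
    ∀ p i, p ≤ m → i ≤ m + 1 → i ≠ p → i ≠ p + 1 →
      K.d m i (K.s m p a) = K.basept b m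
  | 0, a, _, p, i, hp, hi, h1, h2 => by omega
  | m' + 1, a, ha, p, i, hp, hi, h1, h2 => by
    rcases Nat.lt_or_ge i p with h | h
    · rw [K.ds_lt m' i p h (by omega) a, sph_face ha i (by omega),
        K.s_basept b m' (p - 1) (by omega)]
    · have h' : p + 1 < i := by omega
      rw [K.ds_gt m' i p h' (by omega) a, sph_face ha (i - 1) (by omega),
        K.s_basept b m' p (by omega)]

lemma d0_sph' {b : K.obj 0} : ∀ {m : ℕ} (w : K.obj (m + 1)),
    (∀ i : Fin (m + 2), 1 ≤ (i : ℕ) → K.d m i w = K.basept b m) →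
      K.IsSph' b (K.d m 0 w)
  | 0, w, _ => trivial
  | m' + 1, w, hw => by
    intro i
    have h := K.dd m' 0 (i + 1) (by omega) (by have := i.isLt; omega) w
    rw [show ((i:ℕ) + 1 - 1) = (i:ℕ) from rfl] at h
    rw [← h, hw ⟨(i:ℕ) + 1, by have := i.isLt; omega⟩ (by simp),
      K.d_basept b m' 0 (by omega)]

lemma homotopyTuple_desc {b : K.obj 0} : ∀ {n : ℕ} (a c : K.obj n), K.IsSph' b a →
    K.homotopyTuple a c = fun i : Fin (n + 2) =>
      if (i : ℕ) = n then a else if (i : ℕ) = n + 1 then c else K.basept b n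
  | 0, a, c, _ => by
    funext i
    match i with
    | 0 => rfl
    | 1 => rfl
  | n' + 1, a, c, ha => by
    funext i
    have hi := i.isLt
    show (if (i : ℕ) < n' + 1 then K.s n' n' (K.d n' i a)
      else if (i : ℕ) = n' + 1 then a else c) = _
    rcases Nat.lt_or_ge (i : ℕ) (n' + 1) with h | h
    · rw [if_pos h, if_neg (by omega), if_neg (by omega),
        sph_face ha i (by omega), K.s_basept b n' n' le_rfl]
    · rcases Nat.eq_or_lt_of_le h with h' | h'
      · rw [if_neg (by omega), if_pos h'.symm, if_pos h'.symm]
      · rw [if_neg (by omega), if_neg (by omega), if_neg (by omega),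
          if_pos (by omega)]

/-- Witness that the `(m+2)`-tuple with `a` at position `p` and base points
elsewhere is a boundary in the subcomplex `M`. -/
def EWit (K : SSetC) (M : Subcomplex K) (b : K.obj 0) (m p : ℕ) (a : K.obj m) : Prop :=
  ∃ v, v ∈ M.mem (m + 1) ∧ ∀ i, i ≤ m + 1 →
    K.d m i v = if i = p then a else K.basept b m

/-- Witness that the tuple with `a` at position `m`, `c` at position `m+1` and
base points elsewhere is a boundary in `M`. -/
def RWit (K : SSetC) (M : Subcomplex K) (b : K.obj 0) (m : ℕ) (a c : K.obj m) : Prop :=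
  ∃ v, v ∈ M.mem (m + 1) ∧ ∀ i, i ≤ m + 1 →
    K.d m i v = if i = m then a else if i = m + 1 then c else K.basept b m

lemma EW_up {M : Subcomplex K} (hM : M.IsKan) {b : K.obj 0}
    (hbM : ∀ n, K.basept b n ∈ M.mem n) {m p : ℕ} (hp : p ≤ m) {a : K.obj m}
    (haM : a ∈ M.mem m)
    (ha : ∀ i, i ≤ m + 1 → i ≠ p → i ≠ p + 1 → K.d m i (K.s m p a) = K.basept b m)
    (h : EWit K M b m p a) : EWit K M b m (p + 1) a := by
  obtain ⟨v, hvM, hv⟩ := h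
  set c : ℕ → K.obj (m + 1) := fun i =>
    if i = p then v else if i = p + 1 then K.s m p a else K.basept b (m + 1) with hc
  have hface : ∀ j, j ≤ m + 2 → ∀ i, i ≤ m + 1 → K.d m i (c j) =
      if (j = p ∧ i = p) ∨ (j = p + 1 ∧ (i = p ∨ i = p + 1)) then a
      else K.basept b m := by
    intro j hj i hi
    by_cases hjp : j = p
    · rw [hc]; simp only [if_pos hjp, hv i hi]
      split_ifs <;> first | rfl | omega | simp_all
    · by_cases hjp1 : j = p + 1
      · rw [hc]; simp only [if_neg hjp, if_pos hjp1]
        by_cases hip : i = p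
        · rw [hip, K.ds_self m p hp a]; split_ifs <;> first | rfl | omega | simp_all
        · by_cases hip1 : i = p + 1
          · rw [hip1, K.ds_succ m p hp a]; split_ifs <;> first | rfl | omega | simp_all
          · rw [ha i hi hip hip1]; split_ifs <;> first | rfl | omega | simp_all
      · rw [hc]; simp only [if_neg hjp, if_neg hjp1]
        rw [K.d_basept b m i hi]; split_ifs <;> first | rfl | omega | simp_all
  obtain ⟨u, huM, hu⟩ := fillN M hM m (p + 2) (by omega) c
    (by
      intro i hi hik
      simp only [hc]
      split_ifs with h1 h2
      · exact hvM
      · exact M.s_mem m p hp a haM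
      · exact hbM (m + 1))
    (by
      intro i j hij hj hik hjk
      rw [hface j hj i (by omega), hface i (by omega) (j - 1) (by omega)]
      split_ifs <;> first | rfl | omega | simp_all)
  refine ⟨K.d (m + 1) (p + 2) u, M.d_mem (m + 1) (p + 2) (by omega) u huM, ?_⟩
  intro i hi
  rcases Nat.lt_or_ge i (p + 2) with h | h
  · rw [K.dd m i (p + 2) h (by omega) u]
    have : K.d (m + 1) i u = c i := hu i (by omega) (by omega)
    rw [this, show p + 2 - 1 = p + 1 from rfl,
      hface i (by omega) (p + 1) (by omega)]
    split_ifs <;> first | rfl | omega | simp_all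
  · have hd := K.dd m (p + 2) (i + 1) (by omega) (by omega) u
    rw [show i + 1 - 1 = i from rfl] at hd
    rw [← hd, hu (i + 1) (by omega) (by omega),
      hface (i + 1) (by omega) (p + 2) (by omega)]
    split_ifs <;> first | rfl | omega | simp_all

lemma EW_down {M : Subcomplex K} (hM : M.IsKan) {b : K.obj 0}
    (hbM : ∀ n, K.basept b n ∈ M.mem n) {m p : ℕ} (hp : p ≤ m) {a : K.obj m}
    (haM : a ∈ M.mem m)
    (ha : ∀ i, i ≤ m + 1 → i ≠ p → i ≠ p + 1 → K.d m i (K.s m p a) = K.basept b m)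
    (h : EWit K M b m (p + 1) a) : EWit K M b m p a := by
  obtain ⟨v, hvM, hv⟩ := h
  set c : ℕ → K.obj (m + 1) := fun i =>
    if i = p + 1 then K.s m p a else if i = p + 2 then v else K.basept b (m + 1) with hc
  have hface : ∀ j, j ≤ m + 2 → ∀ i, i ≤ m + 1 → K.d m i (c j) =
      if (j = p + 2 ∧ i = p + 1) ∨ (j = p + 1 ∧ (i = p ∨ i = p + 1)) then a
      else K.basept b m := by
    intro j hj i hi
    by_cases hjp1 : j = p + 1
    · rw [hc]; simp only [if_pos hjp1]
      by_cases hip : i = p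
      · rw [hip, K.ds_self m p hp a]; split_ifs <;> first | rfl | omega | simp_all
      · by_cases hip1 : i = p + 1
        · rw [hip1, K.ds_succ m p hp a]; split_ifs <;> first | rfl | omega | simp_all
        · rw [ha i hi hip hip1]; split_ifs <;> first | rfl | omega | simp_all
    · by_cases hjp2 : j = p + 2
      · rw [hc]; simp only [if_neg hjp1, if_pos hjp2, hv i hi]
        split_ifs <;> first | rfl | omega | simp_all
      · rw [hc]; simp only [if_neg hjp1, if_neg hjp2]
        rw [K.d_basept b m i hi]; split_ifs <;> first | rfl | omega | simp_all
  obtain ⟨u, huM, hu⟩ := fillN M hM m p (by omega) c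
    (by
      intro i hi hik
      simp only [hc]
      split_ifs with h1 h2
      · exact M.s_mem m p hp a haM
      · exact hvM
      · exact hbM (m + 1))
    (by
      intro i j hij hj hik hjk
      rw [hface j hj i (by omega), hface i (by omega) (j - 1) (by omega)]
      split_ifs <;> first | rfl | omega | simp_all)
  refine ⟨K.d (m + 1) p u, M.d_mem (m + 1) p (by omega) u huM, ?_⟩
  intro i hi
  rcases Nat.lt_or_ge i p with h | h
  · rw [K.dd m i p h (by omega) u, hu i (by omega) (by omega),
      hface i (by omega) (p - 1) (by omega)]
    split_ifs <;> first | rfl | omega | simp_all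
  · have hd := K.dd m p (i + 1) (by omega) (by omega) u
    rw [show i + 1 - 1 = i from rfl] at hd
    rw [← hd, hu (i + 1) (by omega) (by omega), hface (i + 1) (by omega) p (by omega)]
    split_ifs <;> first | rfl | omega | simp_all

lemma EW_to_zero {M : Subcomplex K} (hM : M.IsKan) {b : K.obj 0}
    (hbM : ∀ n, K.basept b n ∈ M.mem n) {m : ℕ} {a : K.obj m} (haM : a ∈ M.mem m)
    (has : ∀ p, p ≤ m → ∀ i, i ≤ m + 1 → i ≠ p → i ≠ p + 1 →
      K.d m i (K.s m p a) = K.basept b m) :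
    ∀ p, p ≤ m + 1 → EWit K M b m p a → EWit K M b m 0 a
  | 0, _, h => h
  | p + 1, hp, h =>
    EW_to_zero hM hbM haM has p (by omega)
      (EW_down hM hbM (by omega) haM (has p (by omega)) h)

lemma EW_from_zero {M : Subcomplex K} (hM : M.IsKan) {b : K.obj 0}
    (hbM : ∀ n, K.basept b n ∈ M.mem n) {m : ℕ} {a : K.obj m} (haM : a ∈ M.mem m)
    (has : ∀ p, p ≤ m → ∀ i, i ≤ m + 1 → i ≠ p → i ≠ p + 1 →
      K.d m i (K.s m p a) = K.basept b m) :
    ∀ p, p ≤ m + 1 → EWit K M b m 0 a → EWit K M b m p a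
  | 0, _, h => h
  | p + 1, hp, h =>
    EW_up hM hbM (by omega) haM (has p (by omega))
      (EW_from_zero hM hbM haM has p (by omega) h)

lemma RW_refl {M : Subcomplex K} {b : K.obj 0} {m : ℕ} {a : K.obj m}
    (ha : K.IsSph' b a) (haM : a ∈ M.mem m) : RWit K M b m a a := by
  refine ⟨K.s m m a, M.s_mem m m le_rfl a haM, ?_⟩
  intro i hi
  by_cases h1 : i = m
  · rw [h1, K.ds_self m m le_rfl a]; split_ifs <;> first | rfl | omega | simp_all
  · by_cases h2 : i = m + 1
    · rw [h2, K.ds_succ m m le_rfl a]; split_ifs <;> first | rfl | omega | simp_all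
    · rw [sph'_s_face a ha m i le_rfl hi h1 h2]; split_ifs <;> first | rfl | omega | simp_all

lemma RW_fill_top {M : Subcomplex K} (hM : M.IsKan) {b : K.obj 0}
    (hbM : ∀ n, K.basept b n ∈ M.mem n) {m : ℕ} {a e c : K.obj m}
    (h1 : RWit K M b m a e) (h2 : RWit K M b m a c) : RWit K M b m e c := by
  obtain ⟨z1, hz1M, hz1⟩ := h1
  obtain ⟨z2, hz2M, hz2⟩ := h2
  set cc : ℕ → K.obj (m + 1) := fun i =>
    if i = m then z1 else if i = m + 1 then z2 else K.basept b (m + 1) with hcc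
  have hface : ∀ j, j ≤ m + 2 → ∀ i, i ≤ m + 1 → K.d m i (cc j) =
      if j = m ∧ i = m then a else if j = m ∧ i = m + 1 then e
      else if j = m + 1 ∧ i = m then a else if j = m + 1 ∧ i = m + 1 then c
      else K.basept b m := by
    intro j hj i hi
    by_cases hj1 : j = m
    · rw [hcc]; simp only [if_pos hj1, hz1 i hi]
      split_ifs <;> first | rfl | omega | simp_all
    · by_cases hj2 : j = m + 1
      · rw [hcc]; simp only [if_neg hj1, if_pos hj2, hz2 i hi]
        split_ifs <;> first | rfl | omega | simp_all
      · rw [hcc]; simp only [if_neg hj1, if_neg hj2]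
        rw [K.d_basept b m i hi]; split_ifs <;> first | rfl | omega | simp_all
  obtain ⟨u, huM, hu⟩ := fillN M hM m (m + 2) (by omega) cc
    (by
      intro i hi hik
      simp only [hcc]
      split_ifs
      · exact hz1M
      · exact hz2M
      · exact hbM (m + 1))
    (by
      intro i j hij hj hik hjk
      rw [hface j hj i (by omega), hface i (by omega) (j - 1) (by omega)]
      split_ifs <;> first | rfl | omega | simp_all)
  refine ⟨K.d (m + 1) (m + 2) u, M.d_mem (m + 1) (m + 2) (by omega) u huM, ?_⟩
  intro i hi
  rw [K.dd m i (m + 2) (by omega) (by omega) u, hu i (by omega) (by omega),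
    show m + 2 - 1 = m + 1 from rfl, hface i (by omega) (m + 1) (by omega)]
  split_ifs <;> first | rfl | omega | simp_all

lemma RW_fill_bot {M : Subcomplex K} (hM : M.IsKan) {b : K.obj 0}
    (hbM : ∀ n, K.basept b n ∈ M.mem n) {m : ℕ} {a e c : K.obj m}
    (h2 : RWit K M b m a c) (h3 : RWit K M b m e c) : RWit K M b m a e := by
  obtain ⟨z2, hz2M, hz2⟩ := h2
  obtain ⟨z3, hz3M, hz3⟩ := h3
  set cc : ℕ → K.obj (m + 1) := fun i =>
    if i = m + 1 then z2 else if i = m + 2 then z3 else K.basept b (m + 1) with hcc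
  have hface : ∀ j, j ≤ m + 2 → ∀ i, i ≤ m + 1 → K.d m i (cc j) =
      if j = m + 1 ∧ i = m then a else if j = m + 1 ∧ i = m + 1 then c
      else if j = m + 2 ∧ i = m then e else if j = m + 2 ∧ i = m + 1 then c
      else K.basept b m := by
    intro j hj i hi
    by_cases hj1 : j = m + 1
    · rw [hcc]; simp only [if_pos hj1, hz2 i hi]
      split_ifs <;> first | rfl | omega | simp_all
    · by_cases hj2 : j = m + 2
      · rw [hcc]; simp only [if_neg hj1, if_pos hj2, hz3 i hi]
        split_ifs <;> first | rfl | omega | simp_all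
      · rw [hcc]; simp only [if_neg hj1, if_neg hj2]
        rw [K.d_basept b m i hi]; split_ifs <;> first | rfl | omega | simp_all
  obtain ⟨u, huM, hu⟩ := fillN M hM m m (by omega) cc
    (by
      intro i hi hik
      simp only [hcc]
      split_ifs
      · exact hz2M
      · exact hz3M
      · exact hbM (m + 1))
    (by
      intro i j hij hj hik hjk
      rw [hface j hj i (by omega), hface i (by omega) (j - 1) (by omega)]
      split_ifs <;> first | rfl | omega | simp_all)
  refine ⟨K.d (m + 1) m u, M.d_mem (m + 1) m (by omega) u huM, ?_⟩
  intro i hi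
  rcases Nat.lt_or_ge i m with h | h
  · rw [K.dd m i m h (by omega) u, hu i (by omega) (by omega),
      hface i (by omega) (m - 1) (by omega)]
    split_ifs <;> first | rfl | omega | simp_all
  · have hd := K.dd m m (i + 1) (by omega) (by omega) u
    rw [show i + 1 - 1 = i from rfl] at hd
    rw [← hd, hu (i + 1) (by omega) (by omega), hface (i + 1) (by omega) m (by omega)]
    split_ifs <;> first | rfl | omega | simp_all

lemma toHom {b : K.obj 0} {n : ℕ} {a c : K.obj n} (ha : K.IsSph' b a)
    (v : K.obj (n + 1))
    (hv : ∀ i, i ≤ n + 1 → K.d n i v =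
      if i = n then a else if i = n + 1 then c else K.basept b n) :
    K.bdry v = K.homotopyTuple a c := by
  rw [homotopyTuple_desc a c ha]
  funext i
  have hi := i.isLt
  show K.d n ↑i v = _
  rw [hv ↑i (by omega)]

lemma fromHom {b : K.obj 0} {n : ℕ} {a c : K.obj n} (ha : K.IsSph' b a)
    (v : K.obj (n + 1)) (hv : K.bdry v = K.homotopyTuple a c) :
    ∀ i, i ≤ n + 1 → K.d n i v =
      if i = n then a else if i = n + 1 then c else K.basept b n := by
  intro i hi
  have h := congrFun hv ⟨i, by omega⟩
  rw [homotopyTuple_desc a c ha] at h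
  exact h

lemma relTuple_desc {b : K.obj 0} {m : ℕ} (hLs x y : K.obj (m + 1))
    (hx : K.IsSph b x) :
    K.relTuple hLs x y = fun i : Fin (m + 3) =>
      if (i : ℕ) = 0 then hLs else if (i : ℕ) = m + 1 then x
      else if (i : ℕ) = m + 2 then y else K.basept b (m + 1) := by
  funext i
  have hi := i.isLt
  show (if (i : ℕ) = 0 then hLs else if (i : ℕ) < m + 1 then K.s m m (K.d m ↑i x)
    else if (i : ℕ) = m + 1 then x else y) = _
  by_cases h0 : (i : ℕ) = 0
  · rw [if_pos h0, if_pos h0]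
  · rw [if_neg h0, if_neg h0]
    rcases Nat.lt_or_ge (i : ℕ) (m + 1) with h | h
    · rw [if_pos h, if_neg (by omega), if_neg (by omega),
        sph_face hx ↑i (by omega), K.s_basept b m m le_rfl]
    · by_cases h1 : (i : ℕ) = m + 1
      · rw [if_neg (by omega), if_pos h1, if_pos h1]
      · rw [if_neg (by omega), if_neg h1, if_neg h1, if_pos (by omega)]

lemma toRel {b : K.obj 0} {m : ℕ} (hLs x y : K.obj (m + 1)) (hx : K.IsSph b x)
    (u : K.obj (m + 2))
    (hu : ∀ i, i ≤ m + 2 → K.d (m + 1) i u =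
      if i = 0 then hLs else if i = m + 1 then x
      else if i = m + 2 then y else K.basept b (m + 1)) :
    K.bdry u = K.relTuple hLs x y := by
  rw [relTuple_desc hLs x y hx]
  funext i
  have hi := i.isLt
  show K.d (m + 1) ↑i u = _
  rw [hu ↑i (by omega)]

lemma fromRel {b : K.obj 0} {m : ℕ} (hLs x y : K.obj (m + 1)) (hx : K.IsSph b x)
    (u : K.obj (m + 2)) (hu : K.bdry u = K.relTuple hLs x y) :
    ∀ i, i ≤ m + 2 → K.d (m + 1) i u =
      if i = 0 then hLs else if i = m + 1 then x
      else if i = m + 2 then y else K.basept b (m + 1) := by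
  intro i hi
  have h := congrFun hu ⟨i, by omega⟩
  rw [relTuple_desc hLs x y hx] at h
  exact h

lemma sph_compat {b : K.obj 0} {m : ℕ} (c : ℕ → K.obj (m + 1))
    (hc : ∀ j, j ≤ m + 2 → ∀ i, i ≤ m + 1 → K.d m i (c j) = K.basept b m)
    (i j : ℕ) (hij : i < j) (hj : j ≤ m + 2) :
    K.d m i (c j) = K.d m (j - 1) (c i) := by
  rw [hc j hj i (by omega), hc i (by omega) (j - 1) (by omega)]

lemma relSph_face {b : K.obj 0} {m : ℕ} {w : K.obj (m + 1)}
    (hwi : ∀ i : Fin (m + 2), 1 ≤ (i : ℕ) → K.d m i w = K.basept b m)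
    (i : ℕ) (h1 : 1 ≤ i) (hi : i ≤ m + 1) : K.d m i w = K.basept b m :=
  hwi ⟨i, by omega⟩ h1

lemma isSph'_of {b : K.obj 0} {m : ℕ} {x : K.obj (m + 1)} (h : K.IsSph b x) :
    K.IsSph' b x := h

end SSetC
set_option maxHeartbeats 4000000 in
open SSetC in
/-- The natural homotopy sequence of a pointed pair `(K, L, ⋆)` of
Kan complexes
`… → π_{n+1}(K,L) --∂--> π_n(L) --i_*--> π_n(K) --p_*--> π_n(K,L) → …
   → π_1(K,L) --∂--> π_0(L) --i_*--> π_0(K)`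
is exact, stated on representatives:
* exactness at `π_n(K, L, ⋆)` (`n = m+1 ≥ 1`): the class of a relative spherical
  simplex `w` is sent to the trivial element by `∂_*[w] = [d_0 w]` iff it is in
  the image of `p_*`;
* exactness at `π_n(L, ⋆)` (all `n ≥ 0`, in the group sense for `n ≥ 1` and the
  pointed-set sense for `n = 0`): `i_*[x] = [⋆]` iff `[x]` is in the image of `∂_*`;
* exactness at `π_n(K, ⋆)` (`n = m+1 ≥ 1`): `p_*[x] = [⋆]` iff `[x]` is in the
  image of `i_*`. -/
theorem exact_sequence_of_pair (K : SSetC) (hK : K.IsKan)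
    (L : Subcomplex K) (hL : L.IsKan) (b : K.obj 0) (hb : b ∈ L.mem 0) :
    (∀ (m : ℕ) (w : K.obj (m + 1)), K.IsRelSph L b w →
      (K.HomotopicIn L (K.d m 0 w) (K.basept b m) ↔
        ∃ x : K.obj (m + 1), K.IsSph b x ∧ K.HomotopicRel L x w)) ∧
    (∀ (n : ℕ) (x : K.obj n), x ∈ L.mem n → K.IsSph' b x →
      (K.Homotopic x (K.basept b n) ↔
        ∃ w : K.obj (n + 1), K.IsRelSph L b w ∧ K.HomotopicIn L (K.d n 0 w) x)) ∧
    (∀ (m : ℕ) (x : K.obj (m + 1)), K.IsSph b x →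
      (K.HomotopicRel L x (K.basept b (m + 1)) ↔
        ∃ l : K.obj (m + 1), l ∈ L.mem (m + 1) ∧ K.IsSph b l ∧ K.Homotopic l x)) := by
  have hbL : ∀ n, K.basept b n ∈ L.mem n := mem_basept L hb
  have hT : (K.topSub).IsKan := topSub_isKan hK
  have hbT : ∀ n, K.basept b n ∈ (K.topSub).mem n := fun n => Set.mem_univ _
  refine ⟨?_, ?_, ?_⟩
  · -- exactness at π_{m+1}(K, L)
    intro m w hw
    obtain ⟨hw0L, hwi⟩ := hw
    have hl : K.IsSph' b (K.d m 0 w) := d0_sph' w hwi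
    constructor
    · rintro ⟨zL, hzLM, hzL⟩
      have hzi := fromHom hl zL hzL
      have hRW : RWit K L b m (K.d m 0 w) (K.basept b m) := ⟨zL, hzLM, hzi⟩
      obtain ⟨hLs, hLsM, hLdesc⟩ := RW_fill_top hL hbL hRW (RW_refl hl hw0L)
      set cc : ℕ → K.obj (m + 1) := fun i =>
        if i = 0 then hLs else if i = m + 2 then w else K.basept b (m + 1) with hcc
      have hface : ∀ j, j ≤ m + 2 → ∀ i, i ≤ m + 1 → K.d m i (cc j) =
          if (j = 0 ∧ i = m + 1) ∨ (j = m + 2 ∧ i = 0) then K.d m 0 w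
          else K.basept b m := by
        intro j hj i hi
        by_cases hj0 : j = 0
        · simp only [hcc, if_pos hj0]
          rw [hLdesc i hi]
          split_ifs <;> first | rfl | omega | simp_all
        · by_cases hj2 : j = m + 2
          · simp only [hcc, if_neg hj0, if_pos hj2]
            by_cases hi0 : i = 0
            · rw [hi0]; split_ifs <;> first | rfl | omega | simp_all
            · rw [relSph_face hwi i (by omega) hi]
              split_ifs <;> first | rfl | omega | simp_all
          · simp only [hcc, if_neg hj0, if_neg hj2]
            rw [K.d_basept b m i hi]
            split_ifs <;> first | rfl | omega | simp_all
      obtain ⟨u, _, hu⟩ := fillN K.topSub hT m (m + 1) (by omega) cc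
        (fun i _ _ => Set.mem_univ _)
        (by
          intro i j hij hj hik hjk
          rw [hface j hj i (by omega), hface i (by omega) (j - 1) (by omega)]
          split_ifs <;> first | rfl | omega | simp_all)
      have hxf : ∀ i, i ≤ m + 1 →
          K.d m i (K.d (m + 1) (m + 1) u) = K.basept b m := by
        intro i hi
        rcases Nat.lt_or_ge i (m + 1) with h | h
        · rw [K.dd m i (m + 1) h (by omega) u, hu i (by omega) (by omega),
            hface i (by omega) (m + 1 - 1) (by omega)]
          split_ifs <;> first | rfl | omega | simp_all
        · have hi1 : i = m + 1 := by omega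
          have hd := K.dd m (m + 1) (m + 2) (by omega) (by omega) u
          rw [show m + 2 - 1 = m + 1 from rfl] at hd
          rw [hi1, ← hd, hu (m + 2) (by omega) (by omega),
            hface (m + 2) (by omega) (m + 1) (by omega)]
          split_ifs <;> first | rfl | omega | simp_all
      have hufull : ∀ i, i ≤ m + 2 → K.d (m + 1) i u =
          if i = 0 then hLs else if i = m + 1 then K.d (m + 1) (m + 1) u
          else if i = m + 2 then w else K.basept b (m + 1) := by
        intro i hi
        by_cases h1 : i = m + 1
        · rw [h1, if_neg (by omega), if_pos rfl]
        · rw [hu i hi h1]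
          simp only [hcc]
          split_ifs <;> first | rfl | omega | simp_all
      refine ⟨K.d (m + 1) (m + 1) u,
        fun i => hxf ↑i (by have := i.isLt; omega),
        fun i h1 h2 => by rw [hxf i h2, relSph_face hwi i h1 h2],
        by rw [hxf 0 (by omega)]; exact hbL m,
        hw0L, hLs, hLsM, u, ?_⟩
      exact toRel hLs _ w (fun i => hxf ↑i (by have := i.isLt; omega)) u hufull
    · rintro ⟨x, hx, hagree, hx0L, hw0L', hLs, hLsM, u, hu⟩
      have hui := fromRel hLs x w hx u hu
      have hLdesc : ∀ i, i ≤ m + 1 → K.d m i hLs =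
          if i = m then K.basept b m else if i = m + 1 then K.d m 0 w
          else K.basept b m := by
        intro i hi
        have hd := K.dd m 0 (i + 1) (by omega) (by omega) u
        rw [show i + 1 - 1 = i from rfl] at hd
        have h0 : K.d (m + 1) 0 u = hLs := by rw [hui 0 (by omega), if_pos rfl]
        rw [← h0, ← hd, hui (i + 1) (by omega)]
        by_cases h1 : i + 1 = m + 1
        · rw [if_neg (by omega), if_pos h1, sph_face hx 0 (by omega)]
          split_ifs <;> first | rfl | omega | simp_all
        · by_cases h2 : i + 1 = m + 2
          · rw [if_neg (by omega), if_neg h1, if_pos h2]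
            split_ifs <;> first | rfl | omega | simp_all
          · rw [if_neg (by omega), if_neg h1, if_neg h2,
              K.d_basept b m 0 (by omega)]
            split_ifs <;> first | rfl | omega | simp_all
      have hRW : RWit K L b m (K.basept b m) (K.d m 0 w) := ⟨hLs, hLsM, hLdesc⟩
      obtain ⟨v, hvM, hv⟩ := RW_fill_bot hL hbL (RW_refl hl hw0L) hRW
      exact ⟨v, hvM, toHom hl v hv⟩
  · -- exactness at π_n(L)
    intro n x hxL hx
    constructor
    · rintro ⟨z, hz⟩
      have hzi := fromHom hx z hz
      have hE : EWit K K.topSub b n n x := by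
        refine ⟨z, Set.mem_univ _, ?_⟩
        intro i hi
        rw [hzi i hi]
        split_ifs <;> first | rfl | omega | simp_all
      obtain ⟨w, _, hwd⟩ := EW_to_zero hT hbT (Set.mem_univ x)
        (fun p hp i hi h1 h2 => sph'_s_face x hx p i hp hi h1 h2) n (by omega) hE
      have hw0 : K.d n 0 w = x := by rw [hwd 0 (by omega), if_pos rfl]
      refine ⟨w, ⟨by rw [hw0]; exact hxL, ?_⟩, ?_⟩
      · intro i h1
        rw [hwd ↑i (by have := i.isLt; omega), if_neg (by omega)]
      · rw [hw0]
        obtain ⟨v, hvM, hv⟩ := RW_refl (M := L) hx hxL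
        exact ⟨v, hvM, toHom hx v hv⟩
    · rintro ⟨w, ⟨hw0L, hwi⟩, hhom⟩
      obtain ⟨zL, hzLM, hzL⟩ := hhom
      have hl : K.IsSph' b (K.d n 0 w) := d0_sph' w hwi
      have hzi := fromHom hl zL hzL
      have hwE : EWit K K.topSub b n 0 (K.d n 0 w) := by
        refine ⟨w, Set.mem_univ _, ?_⟩
        intro i hi
        by_cases h0 : i = 0
        · rw [h0, if_pos rfl]
        · rw [if_neg h0, relSph_face hwi i (by omega) hi]
      obtain ⟨w', _, hw'⟩ := EW_from_zero hT hbT (Set.mem_univ _)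
        (fun p hp i hi h1 h2 => sph'_s_face _ hl p i hp hi h1 h2) n (by omega) hwE
      set cc : ℕ → K.obj (n + 1) := fun i =>
        if i = n then w' else if i = n + 1 then zL else K.basept b (n + 1) with hcc
      have hface : ∀ j, j ≤ n + 2 → ∀ i, i ≤ n + 1 → K.d n i (cc j) =
          if (j = n ∧ i = n) ∨ (j = n + 1 ∧ i = n) then K.d n 0 w
          else if j = n + 1 ∧ i = n + 1 then x else K.basept b n := by
        intro j hj i hi
        by_cases hj1 : j = n
        · simp only [hcc, if_pos hj1]
          rw [hw' i hi]
          split_ifs <;> first | rfl | omega | simp_all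
        · by_cases hj2 : j = n + 1
          · simp only [hcc, if_neg hj1, if_pos hj2]
            rw [hzi i hi]
            split_ifs <;> first | rfl | omega | simp_all
          · simp only [hcc, if_neg hj1, if_neg hj2]
            rw [K.d_basept b n i hi]
            split_ifs <;> first | rfl | omega | simp_all
      obtain ⟨U, _, hU⟩ := fillN K.topSub hT n (n + 2) (by omega) cc
        (fun i _ _ => Set.mem_univ _)
        (by
          intro i j hij hj hik hjk
          rw [hface j hj i (by omega), hface i (by omega) (j - 1) (by omega)]
          split_ifs <;> first | rfl | omega | simp_all)
      have hzdesc : ∀ i, i ≤ n + 1 → K.d n i (K.d (n + 1) (n + 2) U) =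
          if i = n then K.basept b n else if i = n + 1 then x
          else K.basept b n := by
        intro i hi
        rw [K.dd n i (n + 2) (by omega) (by omega) U, hU i (by omega) (by omega),
          hface i (by omega) (n + 2 - 1) (by omega)]
        split_ifs <;> first | rfl | omega | simp_all
      obtain ⟨v, _, hv⟩ := RW_fill_bot hT hbT (RW_refl hx (Set.mem_univ x))
        ⟨K.d (n + 1) (n + 2) U, Set.mem_univ _, hzdesc⟩
      exact ⟨v, toHom hx v hv⟩
  · -- exactness at π_{m+1}(K)
    intro m x hx
    constructor
    · rintro ⟨hagree, hx0, hp0, hLs, hLsM, u, hu⟩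
      have hui := fromRel hLs x (K.basept b (m + 1)) hx u hu
      have hLsph' : ∀ i, i ≤ m + 1 → K.d m i hLs = K.basept b m := by
        intro i hi
        have hd := K.dd m 0 (i + 1) (by omega) (by omega) u
        rw [show i + 1 - 1 = i from rfl] at hd
        have h0 : K.d (m + 1) 0 u = hLs := by rw [hui 0 (by omega), if_pos rfl]
        rw [← h0, ← hd, hui (i + 1) (by omega)]
        by_cases h1 : i + 1 = m + 1
        · rw [if_neg (by omega), if_pos h1, sph_face hx 0 (by omega)]
        · by_cases h2 : i + 1 = m + 2
          · rw [if_neg (by omega), if_neg h1, if_pos h2,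
              K.d_basept b m 0 (by omega)]
          · rw [if_neg (by omega), if_neg h1, if_neg h2,
              K.d_basept b m 0 (by omega)]
      have hLsph : K.IsSph b hLs := fun i => hLsph' ↑i (by have := i.isLt; omega)
      set c1 : ℕ → K.obj (m + 1) := fun i =>
        if i = m + 2 then hLs else K.basept b (m + 1) with hc1
      have hc1f : ∀ j, j ≤ m + 2 → ∀ ii, ii ≤ m + 1 →
          K.d m ii (c1 j) = K.basept b m := by
        intro j hj ii hii
        simp only [hc1]
        split_ifs
        · exact sph_face hLsph ii hii
        · exact K.d_basept b m ii hii
      obtain ⟨W, hWM, hWf⟩ := fillN L hL m (m + 1) (by omega) c1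
        (by intro i hi hik; simp only [hc1]; split_ifs; exacts [hLsM, hbL (m + 1)])
        (fun i j hij hj _ _ => sph_compat c1 hc1f i j hij hj)
      have h2f : ∀ i, i ≤ m + 1 →
          K.d m i (K.d (m + 1) (m + 1) W) = K.basept b m := by
        intro i hi
        rcases Nat.lt_or_ge i (m + 1) with h | h
        · rw [K.dd m i (m + 1) h (by omega) W, hWf i (by omega) (by omega)]
          exact hc1f i (by omega) (m + 1 - 1) (by omega)
        · have hi1 : i = m + 1 := by omega
          have hd := K.dd m (m + 1) (m + 2) (by omega) (by omega) W
          rw [show m + 2 - 1 = m + 1 from rfl] at hd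
          rw [hi1, ← hd, hWf (m + 2) (by omega) (by omega)]
          exact hc1f (m + 2) (by omega) (m + 1) (by omega)
      set c2 : ℕ → K.obj (m + 1) := fun i =>
        if i = 0 then K.d (m + 1) (m + 1) W else K.basept b (m + 1) with hc2
      have hc2f : ∀ j, j ≤ m + 2 → ∀ ii, ii ≤ m + 1 →
          K.d m ii (c2 j) = K.basept b m := by
        intro j hj ii hii
        simp only [hc2]
        split_ifs
        · exact h2f ii hii
        · exact K.d_basept b m ii hii
      obtain ⟨V, hVM, hVf⟩ := fillN L hL m (m + 1) (by omega) c2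
        (by intro i hi hik; simp only [hc2]; split_ifs
            exacts [L.d_mem (m + 1) (m + 1) (by omega) W hWM, hbL (m + 1)])
        (fun i j hij hj _ _ => sph_compat c2 hc2f i j hij hj)
      have hlf : ∀ i, i ≤ m + 1 →
          K.d m i (K.d (m + 1) (m + 1) V) = K.basept b m := by
        intro i hi
        rcases Nat.lt_or_ge i (m + 1) with h | h
        · rw [K.dd m i (m + 1) h (by omega) V, hVf i (by omega) (by omega)]
          exact hc2f i (by omega) (m + 1 - 1) (by omega)
        · have hi1 : i = m + 1 := by omega
          have hd := K.dd m (m + 1) (m + 2) (by omega) (by omega) V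
          rw [show m + 2 - 1 = m + 1 from rfl] at hd
          rw [hi1, ← hd, hVf (m + 2) (by omega) (by omega)]
          exact hc2f (m + 2) (by omega) (m + 1) (by omega)
      set CC : ℕ → K.obj (m + 2) := fun i =>
        if i = 0 then W else if i = m + 2 then V else if i = m + 3 then u
        else K.basept b (m + 2) with hCC
      have hCf : ∀ j, j ≤ m + 3 → ∀ i, i ≤ m + 2 → K.d (m + 1) i (CC j) =
          if (j = 0 ∧ i = m + 1) ∨ (j = m + 2 ∧ i = 0) then K.d (m + 1) (m + 1) W
          else if (j = 0 ∧ i = m + 2) ∨ (j = m + 3 ∧ i = 0) then hLs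
          else if j = m + 2 ∧ i = m + 1 then K.d (m + 1) (m + 1) V
          else if j = m + 3 ∧ i = m + 1 then x
          else K.basept b (m + 1) := by
        intro j hj i hi
        by_cases hj0 : j = 0
        · simp only [hCC, if_pos hj0]
          by_cases hi1 : i = m + 1
          · rw [hi1]; split_ifs <;> first | rfl | omega | simp_all
          · rw [hWf i hi hi1]
            simp only [hc1]
            split_ifs <;> first | rfl | omega | simp_all
        · by_cases hj2 : j = m + 2
          · simp only [hCC, if_neg hj0, if_pos hj2]
            by_cases hi1 : i = m + 1
            · rw [hi1]; split_ifs <;> first | rfl | omega | simp_all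
            · rw [hVf i hi hi1]
              simp only [hc2]
              split_ifs <;> first | rfl | omega | simp_all
          · by_cases hj3 : j = m + 3
            · simp only [hCC, if_neg hj0, if_neg hj2, if_pos hj3]
              rw [hui i hi]
              split_ifs <;> first | rfl | omega | simp_all
            · simp only [hCC, if_neg hj0, if_neg hj2, if_neg hj3]
              rw [K.d_basept b (m + 1) i hi]
              split_ifs <;> first | rfl | omega | simp_all
      obtain ⟨U, _, hUf⟩ := fillN K.topSub hT (m + 1) (m + 1) (by omega) CC
        (fun i _ _ => Set.mem_univ _)
        (by
          intro i j hij hj hik hjk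
          rw [hCf j hj i (by omega), hCf i (by omega) (j - 1) (by omega)]
          split_ifs <;> first | rfl | omega | simp_all)
      have hzf : ∀ i, i ≤ m + 2 → K.d (m + 1) i (K.d (m + 1 + 1) (m + 1) U) =
          if i = m + 1 then K.d (m + 1) (m + 1) V
          else if i = m + 2 then x else K.basept b (m + 1) := by
        intro i hi
        rcases Nat.lt_or_ge i (m + 1) with h | h
        · rw [K.dd (m + 1) i (m + 1) h (by omega) U, hUf i (by omega) (by omega),
            hCf i (by omega) (m + 1 - 1) (by omega)]
          split_ifs <;> first | rfl | omega | simp_all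
        · by_cases h1 : i = m + 1
          · have hd := K.dd (m + 1) (m + 1) (m + 2) (by omega) (by omega) U
            rw [show m + 2 - 1 = m + 1 from rfl] at hd
            rw [h1, ← hd, hUf (m + 2) (by omega) (by omega),
              hCf (m + 2) (by omega) (m + 1) (by omega)]
            split_ifs <;> first | rfl | omega | simp_all
          · have h2 : i = m + 2 := by omega
            have hd := K.dd (m + 1) (m + 1) (m + 3) (by omega) (by omega) U
            rw [show m + 3 - 1 = m + 2 from rfl] at hd
            rw [h2, ← hd, hUf (m + 3) (by omega) (by omega),
              hCf (m + 3) (by omega) (m + 1) (by omega)]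
            split_ifs <;> first | rfl | omega | simp_all
      refine ⟨K.d (m + 1) (m + 1) V, L.d_mem (m + 1) (m + 1) (by omega) V hVM,
        fun i => hlf ↑i (by have := i.isLt; omega), ?_⟩
      exact ⟨K.d (m + 1 + 1) (m + 1) U,
        toHom (isSph'_of (fun i => hlf ↑i (by have := i.isLt; omega))) _ hzf⟩
    · rintro ⟨ls, hlsM, hlsph, z, hz⟩
      have hzd := fromHom (isSph'_of hlsph) z hz
      set c1 : ℕ → K.obj (m + 1) := fun i =>
        if i = m + 1 then ls else K.basept b (m + 1) with hc1
      have hc1f : ∀ j, j ≤ m + 2 → ∀ ii, ii ≤ m + 1 →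
          K.d m ii (c1 j) = K.basept b m := by
        intro j hj ii hii
        simp only [hc1]
        split_ifs
        · exact sph_face hlsph ii hii
        · exact K.d_basept b m ii hii
      obtain ⟨V, hVM, hVf⟩ := fillN L hL m 0 (by omega) c1
        (by intro i hi hik; simp only [hc1]; split_ifs; exacts [hlsM, hbL (m + 1)])
        (fun i j hij hj _ _ => sph_compat c1 hc1f i j hij hj)
      have h2f : ∀ i, i ≤ m + 1 → K.d m i (K.d (m + 1) 0 V) = K.basept b m := by
        intro i hi
        have hd := K.dd m 0 (i + 1) (by omega) (by omega) V
        rw [show i + 1 - 1 = i from rfl] at hd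
        rw [← hd, hVf (i + 1) (by omega) (by omega)]
        exact hc1f (i + 1) (by omega) 0 (by omega)
      set c2 : ℕ → K.obj (m + 1) := fun i =>
        if i = m + 1 then K.d (m + 1) 0 V else K.basept b (m + 1) with hc2
      have hc2f : ∀ j, j ≤ m + 2 → ∀ ii, ii ≤ m + 1 →
          K.d m ii (c2 j) = K.basept b m := by
        intro j hj ii hii
        simp only [hc2]
        split_ifs
        · exact h2f ii hii
        · exact K.d_basept b m ii hii
      obtain ⟨W, hWM, hWf⟩ := fillN L hL m (m + 2) (by omega) c2
        (by intro i hi hik; simp only [hc2]; split_ifs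
            exacts [L.d_mem (m + 1) 0 (by omega) V hVM, hbL (m + 1)])
        (fun i j hij hj _ _ => sph_compat c2 hc2f i j hij hj)
      have hLf : ∀ i, i ≤ m + 1 →
          K.d m i (K.d (m + 1) (m + 2) W) = K.basept b m := by
        intro i hi
        rw [K.dd m i (m + 2) (by omega) (by omega) W, hWf i (by omega) (by omega)]
        exact hc2f i (by omega) (m + 2 - 1) (by omega)
      set CC : ℕ → K.obj (m + 2) := fun i =>
        if i = 0 then W else if i = m + 1 then z else if i = m + 2 then V
        else K.basept b (m + 2) with hCC
      have hCf : ∀ j, j ≤ m + 3 → ∀ i, i ≤ m + 2 → K.d (m + 1) i (CC j) =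
          if (j = 0 ∧ i = m + 1) ∨ (j = m + 2 ∧ i = 0) then K.d (m + 1) 0 V
          else if j = 0 ∧ i = m + 2 then K.d (m + 1) (m + 2) W
          else if (j = m + 1 ∨ j = m + 2) ∧ i = m + 1 then ls
          else if j = m + 1 ∧ i = m + 2 then x
          else K.basept b (m + 1) := by
        intro j hj i hi
        by_cases hj0 : j = 0
        · simp only [hCC, if_pos hj0]
          by_cases hi2 : i = m + 2
          · rw [hi2]; split_ifs <;> first | rfl | omega | simp_all
          · rw [hWf i hi hi2]
            simp only [hc2]
            split_ifs <;> first | rfl | omega | simp_all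
        · by_cases hj1 : j = m + 1
          · simp only [hCC, if_neg hj0, if_pos hj1]
            rw [hzd i hi]
            split_ifs <;> first | rfl | omega | simp_all
          · by_cases hj2 : j = m + 2
            · simp only [hCC, if_neg hj0, if_neg hj1, if_pos hj2]
              by_cases hi0 : i = 0
              · rw [hi0]; split_ifs <;> first | rfl | omega | simp_all
              · rw [hVf i hi hi0]
                simp only [hc1]
                split_ifs <;> first | rfl | omega | simp_all
            · simp only [hCC, if_neg hj0, if_neg hj1, if_neg hj2]
              rw [K.d_basept b (m + 1) i hi]
              split_ifs <;> first | rfl | omega | simp_all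
      obtain ⟨U, _, hUf⟩ := fillN K.topSub hT (m + 1) (m + 3) (by omega) CC
        (fun i _ _ => Set.mem_univ _)
        (by
          intro i j hij hj hik hjk
          rw [hCf j hj i (by omega), hCf i (by omega) (j - 1) (by omega)]
          split_ifs <;> first | rfl | omega | simp_all)
      have huf : ∀ i, i ≤ m + 2 → K.d (m + 1) i (K.d (m + 1 + 1) (m + 3) U) =
          if i = 0 then K.d (m + 1) (m + 2) W else if i = m + 1 then x
          else if i = m + 2 then K.basept b (m + 1) else K.basept b (m + 1) := by
        intro i hi
        have hd := K.dd (m + 1) i (m + 3) (by omega) (by omega) U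
        rw [show m + 3 - 1 = m + 2 from rfl] at hd
        rw [hd, hUf i (by omega) (by omega), hCf i (by omega) (m + 2) (by omega)]
        split_ifs <;> first | rfl | omega | simp_all
      refine ⟨fun i h1 h2 => by rw [sph_face hx i h2, K.d_basept b m i h2],
        by rw [sph_face hx 0 (by omega)]; exact hbL m,
        by rw [K.d_basept b m 0 (by omega)]; exact hbL m,
        K.d (m + 1) (m + 2) W, L.d_mem (m + 1) (m + 2) (by omega) W hWM,
        K.d (m + 1 + 1) (m + 3) U, ?_⟩
      apply toRel _ x (K.basept b (m + 1)) hx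
      intro i hi
      rw [huf i hi]
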